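/- If ψ_x(t) and ψ_y(t) are unit-norm solutions of Schrödinger equations whose Hamiltonians satisfy ‖H_x(t) − H_y(t)‖ ≤ c for all t ∈ [0,T] (operator norm), then |⟨ψ_x(T), ψ_y(T)⟩| ≥ |⟨ψ_x(0), ψ_y(0)⟩| − c·T. -/

import Mathlib

/-- if `‖H_x(t) − H_y(t)‖ ≤ c` on `[0,T]` then
`|⟨ψ_x(T), ψ_y(T)⟩| ≥ |⟨ψ_x(0), ψ_y(0)⟩| − c T`. -/
theorem stmt3 {n : ℕ} (ψx ψy ψx' ψy' : ℝ → EuclideanSpace ℂ (Fin n))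
    (Hx Hy : ℝ → Matrix (Fin n) (Fin n) ℂ) (c T : ℝ) (hT : 0 ≤ T)
    (hHxc : Continuous Hx) (hHyc : Continuous Hy)
    (hHx : ∀ t, (Hx t).IsHermitian) (hHy : ∀ t, (Hy t).IsHermitian)
    (hux : ∀ t, ‖ψx t‖ = 1) (huy : ∀ t, ‖ψy t‖ = 1)
    (hdx : ∀ t, HasDerivAt ψx (ψx' t) t) (hdy : ∀ t, HasDerivAt ψy (ψy' t) t)
    (hSx : ∀ t, Complex.I • ψx' t = Matrix.toEuclideanCLM (𝕜 := ℂ) (Hx t) (ψx t))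
    (hSy : ∀ t, Complex.I • ψy' t = Matrix.toEuclideanCLM (𝕜 := ℂ) (Hy t) (ψy t))
    (hc : ∀ t ∈ Set.Icc (0 : ℝ) T,
      ‖Matrix.toEuclideanCLM (𝕜 := ℂ) (Hx t - Hy t)‖ ≤ c) :
    ‖inner (𝕜 := ℂ) (ψx T) (ψy T)‖ ≥
      ‖inner (𝕜 := ℂ) (ψx 0) (ψy 0)‖ - c * T := by
  set f : ℝ → ℂ := fun t => inner (𝕜 := ℂ) (ψx t) (ψy t) with hf
  -- derivative of f
  have hψx' : ∀ t, ψx' t = (-Complex.I) • Matrix.toEuclideanCLM (𝕜 := ℂ) (Hx t) (ψx t) := by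
    intro t
    rw [← hSx t, smul_smul]
    simp
  have hψy' : ∀ t, ψy' t = (-Complex.I) • Matrix.toEuclideanCLM (𝕜 := ℂ) (Hy t) (ψy t) := by
    intro t
    rw [← hSy t, smul_smul]
    simp
  have hsym : ∀ (A : Matrix (Fin n) (Fin n) ℂ), A.IsHermitian →
      ∀ x y : EuclideanSpace ℂ (Fin n),
        inner (𝕜 := ℂ) (Matrix.toEuclideanCLM (𝕜 := ℂ) A x) y
          = inner (𝕜 := ℂ) x (Matrix.toEuclideanCLM (𝕜 := ℂ) A y) := by
    intro A hA x y
    have h := Matrix.isHermitian_iff_isSymmetric.mp hA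
    have := h x y
    simpa [← Matrix.coe_toEuclideanCLM_eq_toEuclideanLin] using this
  have hd : ∀ t, HasDerivAt f
      (Complex.I * inner (𝕜 := ℂ) (ψx t)
        (Matrix.toEuclideanCLM (𝕜 := ℂ) (Hx t - Hy t) (ψy t))) t := by
    intro t
    have h := (hdx t).inner ℂ (hdy t)
    have key : inner (𝕜 := ℂ) (ψx t) (ψy' t) + inner (𝕜 := ℂ) (ψx' t) (ψy t)
        = Complex.I * inner (𝕜 := ℂ) (ψx t)
          (Matrix.toEuclideanCLM (𝕜 := ℂ) (Hx t - Hy t) (ψy t)) := by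
      rw [hψx' t, hψy' t, inner_smul_right, inner_smul_left,
        hsym (Hx t) (hHx t), map_sub]
      simp only [ContinuousLinearMap.sub_apply, inner_sub_right]
      simp [Complex.conj_I]
      ring
    rw [key] at h
    exact h
  -- bound the derivative on [0, T]
  have hbound : ∀ t ∈ Set.Icc (0 : ℝ) T,
      ‖Complex.I * inner (𝕜 := ℂ) (ψx t)
        (Matrix.toEuclideanCLM (𝕜 := ℂ) (Hx t - Hy t) (ψy t))‖ ≤ c := by
    intro t ht
    rw [norm_mul, Complex.norm_I, one_mul]
    calc ‖inner (𝕜 := ℂ) (ψx t) (Matrix.toEuclideanCLM (𝕜 := ℂ) (Hx t - Hy t) (ψy t))‖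
        ≤ ‖ψx t‖ * ‖Matrix.toEuclideanCLM (𝕜 := ℂ) (Hx t - Hy t) (ψy t)‖ :=
          norm_inner_le_norm _ _
      _ ≤ ‖ψx t‖ * (‖Matrix.toEuclideanCLM (𝕜 := ℂ) (Hx t - Hy t)‖ * ‖ψy t‖) :=
          mul_le_mul_of_nonneg_left (ContinuousLinearMap.le_opNorm _ _) (norm_nonneg _)
      _ ≤ c := by rw [hux t, huy t, one_mul, mul_one]; exact hc t ht
  have hmvt : ‖f T - f 0‖ ≤ c * ‖T - 0‖ := by
    apply (convex_Icc (0:ℝ) T).norm_image_sub_le_of_norm_hasDerivWithin_le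
      (fun t ht => (hd t).hasDerivWithinAt) hbound
      (Set.left_mem_Icc.mpr hT) (Set.right_mem_Icc.mpr hT)
  rw [sub_zero, Real.norm_eq_abs, abs_of_nonneg hT] at hmvt
  have h1 : ‖f 0‖ - ‖f T‖ ≤ ‖f T - f 0‖ := by
    rw [norm_sub_rev]
    simpa using norm_sub_norm_le (f 0) (f T)
  linarith [h1.trans hmvt]
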